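/- Let a > 0, b > 0, C ≥ 0 and C' ≥ 0 be constants, set c = (1 + e^{a·b})/e^{a·b} and d = 1/(1 + e^{a·b}), and define the normalized sigmoidal-like utility function U(x) = c·( 1/(1 + e^{−a·(x−b)}) − d ). Then the function r ↦ log( U(C + C' + r) ) is strictly concave on (0, ∞). -/

import Mathlib

open Real Set

private lemma strictConcaveOn_congr' {s : Set ℝ} {f g : ℝ → ℝ}
    (h : StrictConcaveOn ℝ s g) (he : Set.EqOn f g s) : StrictConcaveOn ℝ s f := by
  refine ⟨h.1, fun x hx y hy hxy p q hp hq hpq => ?_⟩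
  rw [he hx, he hy, he (h.1 hx hy hp.le hq.le hpq)]
  exact h.2 hx hy hxy hp hq hpq

theorem sigmoid_log_shifted_strict_concave
    (a b C C' : ℝ) (ha : 0 < a) (hb : 0 < b) (hC : 0 ≤ C) (hC' : 0 ≤ C')
    (c d : ℝ) (hc : c = (1 + Real.exp (a * b)) / Real.exp (a * b))
    (hd : d = 1 / (1 + Real.exp (a * b)))
    (U : ℝ → ℝ)
    (hU : ∀ x : ℝ, U x = c * (1 / (1 + Real.exp (-a * (x - b))) - d)) :
    StrictConcaveOn ℝ (Set.Ioi 0) (fun r : ℝ => Real.log (U (C + C' + r))) := by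
  set K := C + C' with hK
  have hK0 : 0 ≤ K := add_nonneg hC hC'
  -- the target function rewritten
  set e1 : ℝ → ℝ := fun r => Real.exp (-(a * (K + r))) with he1
  set e2 : ℝ → ℝ := fun r => Real.exp (-(a * (K + r - b))) with he2
  set g : ℝ → ℝ := fun r => Real.log (1 - e1 r) - Real.log (1 + e2 r) with hg
  have hF1pos : ∀ r : ℝ, 0 < K + r → 0 < 1 - e1 r := by
    intro r hr
    have h0 : -(a * (K + r)) < 0 := by nlinarith
    have : e1 r < 1 := by
      calc e1 r = Real.exp (-(a * (K + r))) := rfl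
        _ < Real.exp 0 := Real.exp_lt_exp.mpr h0
        _ = 1 := Real.exp_zero
    linarith
  have hF2pos : ∀ r : ℝ, 0 < 1 + e2 r := fun r => by positivity
  -- value identity
  have hval : Set.EqOn (fun r : ℝ => Real.log (U (C + C' + r))) g (Set.Ioi 0) := by
    intro r hr
    have hr' : 0 < K + r := by have := mem_Ioi.mp hr; linarith
    have hUeq : U (K + r) = (1 - e1 r) / (1 + e2 r) := by
      rw [hU, hc, hd]
      have hE : (0:ℝ) < Real.exp (a * b) := Real.exp_pos _
      have ht : -a * (K + r - b) = -(a * (K + r - b)) := by ring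
      have hmul : e1 r * Real.exp (a * b) = e2 r := by
        rw [he1, he2, ← Real.exp_add]; ring_nf
      have h2 := hF2pos r
      rw [ht]
      show _ * (1 / (1 + e2 r) - _) = _
      have hE1 : (0:ℝ) < 1 + Real.exp (a * b) := by positivity
      field_simp
      linear_combination hmul
    simp only [← hK]
    rw [hUeq, hg, Real.log_div (ne_of_gt (hF1pos r hr')) (ne_of_gt (hF2pos r))]
  apply strictConcaveOn_congr' _ hval
  -- derivatives
  have hde1 : ∀ r : ℝ, HasDerivAt e1 (e1 r * (-a)) r := by
    intro r
    have h1 : HasDerivAt (fun r : ℝ => -(a * (K + r))) (-a) r := by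
      exact (((hasDerivAt_id r).const_add K).const_mul a).neg.congr_deriv (by simp)
    simpa using h1.exp
  have hde2 : ∀ r : ℝ, HasDerivAt e2 (e2 r * (-a)) r := by
    intro r
    have h1 : HasDerivAt (fun r : ℝ => -(a * (K + r - b))) (-a) r := by
      exact ((((hasDerivAt_id r).const_add K).sub_const b).const_mul a).neg.congr_deriv (by simp)
    simpa using h1.exp
  set g' : ℝ → ℝ := fun r =>
    a * e1 r / (1 - e1 r) + a * e2 r / (1 + e2 r) with hg'
  have hdg : ∀ r : ℝ, 0 < K + r → HasDerivAt g (g' r) r := by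
    intro r hr
    have hF1 : HasDerivAt (fun r => 1 - e1 r) (-(e1 r * (-a))) r :=
      (hde1 r).const_sub 1
    have hF2 : HasDerivAt (fun r => 1 + e2 r) (e2 r * (-a)) r :=
      (hde2 r).const_add 1
    have hL1 := hF1.log (ne_of_gt (hF1pos r hr))
    have hL2 := hF2.log (ne_of_gt (hF2pos r))
    have := hL1.sub hL2
    refine this.congr_deriv ?_
    rw [hg']
    field_simp
    ring
  set g'' : ℝ → ℝ := fun r =>
    -(a ^ 2 * e1 r) / (1 - e1 r) ^ 2 - a ^ 2 * e2 r / (1 + e2 r) ^ 2 with hg''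
  have hdg' : ∀ r : ℝ, 0 < K + r → HasDerivAt g' (g'' r) r := by
    intro r hr
    have hF1 : HasDerivAt (fun r => 1 - e1 r) (-(e1 r * (-a))) r :=
      (hde1 r).const_sub 1
    have hF2 : HasDerivAt (fun r => 1 + e2 r) (e2 r * (-a)) r :=
      (hde2 r).const_add 1
    have hn1 : HasDerivAt (fun r => a * e1 r) (a * (e1 r * (-a))) r :=
      (hde1 r).const_mul a
    have hn2 : HasDerivAt (fun r => a * e2 r) (a * (e2 r * (-a))) r :=
      (hde2 r).const_mul a
    have hq1 := hn1.div hF1 (ne_of_gt (hF1pos r hr))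
    have hq2 := hn2.div hF2 (ne_of_gt (hF2pos r))
    have := hq1.add hq2
    refine this.congr_deriv ?_
    rw [hg'']
    have h1 := ne_of_gt (hF1pos r hr)
    have h2 := ne_of_gt (hF2pos r)
    field_simp
    ring
  apply strictConcaveOn_of_deriv2_neg (convex_Ioi 0)
  · intro r hr
    have hr' : 0 < K + r := by have := mem_Ioi.mp hr; linarith
    exact (hdg r hr').continuousAt.continuousWithinAt
  · intro r hr
    rw [interior_Ioi] at hr
    have hr' : 0 < K + r := by have := mem_Ioi.mp hr; linarith
    have hEq : deriv g =ᶠ[nhds r] g' := by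
      filter_upwards [eventually_gt_nhds (mem_Ioi.mp hr)] with y hy
      have hy' : 0 < K + y := by linarith
      exact (hdg y hy').deriv
    have h2 : deriv (deriv g) r = g'' r := by
      rw [Filter.EventuallyEq.deriv_eq hEq]
      exact (hdg' r hr').deriv
    have : deriv^[2] g r = deriv (deriv g) r := by
      simp [Function.iterate_succ, Function.iterate_one]
    rw [this, h2]
    have hF1 := hF1pos r hr'
    have he1p : 0 < e1 r := Real.exp_pos _
    have he2p : 0 < e2 r := Real.exp_pos _
    have h2' := hF2pos r
    show -(a ^ 2 * e1 r) / (1 - e1 r) ^ 2 - a ^ 2 * e2 r / (1 + e2 r) ^ 2 < 0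
    have t1 : -(a ^ 2 * e1 r) / (1 - e1 r) ^ 2 < 0 :=
      div_neg_of_neg_of_pos (by have := mul_pos (pow_pos ha 2) he1p; linarith) (by positivity)
    have t2 : 0 < a ^ 2 * e2 r / (1 + e2 r) ^ 2 := by positivity
    linarith
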